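/- Sufficient KYP condition for positive realness (Freund–Jarre): a descriptor system (E,A,B,C,D) is positive real if there exists Q ∈ ℝ^{n×n} such that the matrix [[A^T Q + Q^T A, Q^T B − C^T],[B^T Q − C, −D − D^T]] is negative semidefinite and E^T Q is symmetric positive semidefinite (assuming the pencil (E,A) is regular so that the transfer function is defined and the system has no poles in the open right half-plane, i.e. det(sE−A) ≠ 0 for Re(s) > 0). -/

import Mathlib

open Matrix
open scoped ComplexOrder

/-- View a real matrix as a complex matrix. -/
noncomputable def toC {k l : Type*} (M : Matrix k l ℝ) : Matrix k l ℂ :=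
  M.map (fun x => (x : ℂ))

/-- The matrix pencil `s E - A`, viewed over `ℂ`. -/
noncomputable def pencil {n : ℕ} (E A : Matrix (Fin n) (Fin n) ℝ) (s : ℂ) :
    Matrix (Fin n) (Fin n) ℂ :=
  s • toC E - toC A

/-- The transfer function `T(s) = C (sE - A)⁻¹ B + D` of the descriptor system. -/
noncomputable def transfer {n m : ℕ} (E A : Matrix (Fin n) (Fin n) ℝ)
    (B : Matrix (Fin n) (Fin m) ℝ) (C : Matrix (Fin m) (Fin n) ℝ)
    (D : Matrix (Fin m) (Fin m) ℝ) (s : ℂ) : Matrix (Fin m) (Fin m) ℂ :=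
  toC C * (pencil E A s)⁻¹ * toC B + toC D

/-- A descriptor system is positive real if the pencil is invertible on the open right
half-plane and `T(s) + T(s)ᴴ` is positive semidefinite there. -/
def PositiveReal {n m : ℕ} (E A : Matrix (Fin n) (Fin n) ℝ)
    (B : Matrix (Fin n) (Fin m) ℝ) (C : Matrix (Fin m) (Fin n) ℝ)
    (D : Matrix (Fin m) (Fin m) ℝ) : Prop :=
  ∀ s : ℂ, 0 < s.re → (pencil E A s).det ≠ 0 ∧
    (transfer E A B C D s + (transfer E A B C D s)ᴴ).PosSemidef

/-- Complete controllability: `[αE - βA, B]` has full row rank for all `(α,β) ≠ (0,0)`. -/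
def CompletelyControllable {n m : ℕ} (E A : Matrix (Fin n) (Fin n) ℝ)
    (B : Matrix (Fin n) (Fin m) ℝ) : Prop :=
  ∀ α β : ℂ, ¬(α = 0 ∧ β = 0) →
    (fromCols (α • toC E - β • toC A) (toC B)).rank = n

/-- Complete observability: `[αE - βA; C]` has full column rank for all `(α,β) ≠ (0,0)`. -/
def CompletelyObservable {n m : ℕ} (E A : Matrix (Fin n) (Fin n) ℝ)
    (C : Matrix (Fin m) (Fin n) ℝ) : Prop :=
  ∀ α β : ℂ, ¬(α = 0 ∧ β = 0) →
    (fromRows (α • toC E - β • toC A) (toC C)).rank = n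

/-- A descriptor system `(E,A,B,C,D)` is port-Hamiltonian if it admits a pH decomposition. -/
def IsPortHamiltonian {n m : ℕ} (E A : Matrix (Fin n) (Fin n) ℝ)
    (B : Matrix (Fin n) (Fin m) ℝ) (C : Matrix (Fin m) (Fin n) ℝ)
    (D : Matrix (Fin m) (Fin m) ℝ) : Prop :=
  ∃ (J R Q : Matrix (Fin n) (Fin n) ℝ) (G P : Matrix (Fin n) (Fin m) ℝ),
    A = (J - R) * Q ∧ B = G - P ∧ C = (G + P)ᵀ * Q ∧ Jᵀ = -J ∧
    (Eᵀ * Q).PosSemidef ∧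
    (fromBlocks (Qᵀ * R * Q) (Qᵀ * P) (Pᵀ * Q) ((1/2 : ℝ) • (D + Dᵀ))).PosSemidef

/-- The KYP block matrix `[[AᵀQ + QᵀA, QᵀB - Cᵀ], [BᵀQ - C, -D - Dᵀ]]`. -/
def KYPmatrix {n m : ℕ} (A : Matrix (Fin n) (Fin n) ℝ)
    (B : Matrix (Fin n) (Fin m) ℝ) (C : Matrix (Fin m) (Fin n) ℝ)
    (D : Matrix (Fin m) (Fin m) ℝ) (Q : Matrix (Fin n) (Fin n) ℝ) :
    Matrix (Fin n ⊕ Fin m) (Fin n ⊕ Fin m) ℝ :=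
  fromBlocks (Aᵀ * Q + Qᵀ * A) (Qᵀ * B - Cᵀ) (Bᵀ * Q - C) (-D - Dᵀ)

lemma toC_mul {k l p : Type*} [Fintype l] (M : Matrix k l ℝ) (N : Matrix l p ℝ) :
    toC (M * N) = toC M * toC N := by
  ext i j; simp [toC, Matrix.mul_apply]

lemma toC_conjTranspose {k l : Type*} (M : Matrix k l ℝ) : (toC M)ᴴ = toC Mᵀ := by
  ext i j; simp [toC, Matrix.conjTranspose_apply]

lemma toC_add {k l : Type*} (M N : Matrix k l ℝ) : toC (M + N) = toC M + toC N := by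
  ext i j; simp [toC]

lemma toC_sub {k l : Type*} (M N : Matrix k l ℝ) : toC (M - N) = toC M - toC N := by
  ext i j; simp [toC]

lemma toC_neg {k l : Type*} (M : Matrix k l ℝ) : toC (-M) = -toC M := by
  ext i j; simp [toC]

lemma toC_posSemidef {k : Type*} [Fintype k] {M : Matrix k k ℝ}
    (h : M.PosSemidef) : (toC M).PosSemidef := by
  obtain ⟨L, rfl⟩ : ∃ L : Matrix k k ℝ, M = Lᴴ * L := by
    classical
    open scoped MatrixOrder Matrix.Norms.L2Operator in
    exact CStarAlgebra.nonneg_iff_eq_star_mul_self.mp h.nonneg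
  have h1 : toC Lᴴ = (toC L)ᴴ := by
    ext i j; simp [toC, Matrix.conjTranspose_apply]
  rw [toC_mul, h1]
  exact Matrix.posSemidef_conjTranspose_mul_self _

lemma toC_fromBlocks {n m : ℕ} (M11 : Matrix (Fin n) (Fin n) ℝ) (M12 : Matrix (Fin n) (Fin m) ℝ)
    (M21 : Matrix (Fin m) (Fin n) ℝ) (M22 : Matrix (Fin m) (Fin m) ℝ) :
    toC (fromBlocks M11 M12 M21 M22) = fromBlocks (toC M11) (toC M12) (toC M21) (toC M22) := by
  ext (i|i) (j|j) <;> simp [toC, fromBlocks]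

lemma star_quad {k l : Type*} [Fintype k] [Fintype l] (M : Matrix k l ℂ) (a : k → ℂ) (b : l → ℂ) :
    star (star a ⬝ᵥ (M *ᵥ b)) = star b ⬝ᵥ (Mᴴ *ᵥ a) := by
  rw [Matrix.star_dotProduct, star_star, Matrix.star_mulVec, Matrix.dotProduct_mulVec]


/-- Sufficient KYP condition for positive realness (Freund–Jarre). -/
theorem KYP_implies_positive_real {n m : ℕ}
    (E A : Matrix (Fin n) (Fin n) ℝ) (B : Matrix (Fin n) (Fin m) ℝ)
    (C : Matrix (Fin m) (Fin n) ℝ) (D : Matrix (Fin m) (Fin m) ℝ)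
    (hreg : ∀ s : ℂ, 0 < s.re → (pencil E A s).det ≠ 0)
    (hQ : ∃ Q : Matrix (Fin n) (Fin n) ℝ,
      (-(KYPmatrix A B C D Q)).PosSemidef ∧ (Eᵀ * Q).PosSemidef) :
    PositiveReal E A B C D := by
  obtain ⟨Q, hK, hEQ⟩ := hQ
  intro s hs
  refine ⟨hreg s hs, Matrix.posSemidef_iff_dotProduct_mulVec.mpr ⟨Matrix.isHermitian_add_transpose_self _, ?_⟩⟩
  intro u
  have hPunit : IsUnit (pencil E A s).det := isUnit_iff_ne_zero.mpr (hreg s hs)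
  set P : Matrix (Fin n) (Fin n) ℂ := pencil E A s with hPdef
  set x : Fin n → ℂ := P⁻¹ *ᵥ (toC B *ᵥ u) with hxdef
  have hx : P *ᵥ x = toC B *ᵥ u := by
    rw [hxdef, Matrix.mulVec_mulVec, Matrix.mul_nonsing_inv _ hPunit, Matrix.one_mulVec]
  clear_value x
  -- symmetry of EᵀQ
  have hsym : Qᵀ * E = Eᵀ * Q := by
    have h := hEQ.1
    have h2 : (Eᵀ * Q)ᴴ = (Eᵀ * Q)ᵀ := by
      ext i j; simp [Matrix.conjTranspose_apply]
    rw [Matrix.IsHermitian, h2, Matrix.transpose_mul, Matrix.transpose_transpose] at h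
    exact h
  -- atoms
  set σ := star x ⬝ᵥ (toC (Eᵀ*Q) *ᵥ x) with hσdef
  set r1 := star x ⬝ᵥ (toC (Aᵀ*Q) *ᵥ x) with hr1def
  set r2 := star x ⬝ᵥ (toC (Qᵀ*A) *ᵥ x) with hr2def
  set t1 := star x ⬝ᵥ (toC (Qᵀ*B) *ᵥ u) with ht1def
  set t2 := star u ⬝ᵥ (toC (Bᵀ*Q) *ᵥ x) with ht2def
  set w1 := star x ⬝ᵥ (toC Cᵀ *ᵥ u) with hw1def
  set w2 := star u ⬝ᵥ (toC C *ᵥ x) with hw2def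
  set d1 := star u ⬝ᵥ (toC D *ᵥ u) with hd1def
  set d2 := star u ⬝ᵥ (toC Dᵀ *ᵥ u) with hd2def
  clear_value σ r1 r2 t1 t2 w1 w2 d1 d2
  have hσ0 : 0 ≤ σ := by rw [hσdef]; exact (toC_posSemidef hEQ).dotProduct_mulVec_nonneg x
  have hσim : σ.im = 0 := ((Complex.le_def.mp hσ0).2).symm
  have hσre : 0 ≤ σ.re := by simpa using (Complex.le_def.mp hσ0).1
  have hσreal : σ = ((σ.re : ℝ) : ℂ) := by
    apply Complex.ext <;> simp [hσim]
  have hsσ : star σ = σ := by rw [hσreal]; simp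
  -- conjugation relations
  have hsr2 : star r2 = r1 := by
    rw [hr2def, star_quad, toC_conjTranspose, Matrix.transpose_mul,
      Matrix.transpose_transpose, hr1def]
  have hst1 : star t1 = t2 := by
    rw [ht1def, star_quad, toC_conjTranspose, Matrix.transpose_mul,
      Matrix.transpose_transpose, ht2def]
  have hsw2 : star w2 = w1 := by
    rw [hw2def, star_quad, toC_conjTranspose, hw1def]
  have hsd1 : star d1 = d2 := by
    rw [hd1def, star_quad, toC_conjTranspose, hd2def]
  -- the key substitution: Bu = P x
  have hv : toC (Qᵀ*B) *ᵥ u = s • (toC (Eᵀ*Q) *ᵥ x) - toC (Qᵀ*A) *ᵥ x := by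
    calc toC (Qᵀ*B) *ᵥ u = toC Qᵀ *ᵥ (toC B *ᵥ u) := by
          rw [toC_mul, Matrix.mulVec_mulVec]
      _ = toC Qᵀ *ᵥ (P *ᵥ x) := by rw [hx]
      _ = toC Qᵀ *ᵥ (s • (toC E *ᵥ x) - toC A *ᵥ x) := by
          rw [hPdef]; rw [pencil, Matrix.sub_mulVec, Matrix.smul_mulVec]
      _ = s • (toC Qᵀ *ᵥ (toC E *ᵥ x)) - toC Qᵀ *ᵥ (toC A *ᵥ x) := by
          rw [Matrix.mulVec_sub, Matrix.mulVec_smul]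
      _ = s • (toC (Eᵀ*Q) *ᵥ x) - toC (Qᵀ*A) *ᵥ x := by
          rw [Matrix.mulVec_mulVec, Matrix.mulVec_mulVec, ← toC_mul, ← toC_mul, hsym]
  have F1 : t1 = s * σ - r2 := by
    rw [ht1def, hv, dotProduct_sub, dotProduct_smul, smul_eq_mul, ← hσdef, ← hr2def]
  have F2 : t2 = star s * σ - r1 := by
    rw [← hst1, F1, star_sub, star_mul', hsσ, hsr2, mul_comm]
  -- KYP inequality instantiated at (x, u)
  have hKC := (toC_posSemidef hK).dotProduct_mulVec_nonneg (Sum.elim x u)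
  have hstarelim : star (Sum.elim x u) = Sum.elim (star x) (star u) := by
    funext i; cases i <;> rfl
  have hEXP : star (Sum.elim x u) ⬝ᵥ (toC (-(KYPmatrix A B C D Q)) *ᵥ Sum.elim x u)
      = -((r1 + r2) + (t1 - w1) + (t2 - w2) + (-d1 - d2)) := by
    rw [KYPmatrix, toC_neg, toC_fromBlocks, Matrix.neg_mulVec, Matrix.fromBlocks_mulVec,
      hstarelim, dotProduct_neg, Sum.elim_comp_inl, Sum.elim_comp_inr,
      sumElim_dotProduct_sumElim]
    simp only [toC_add, toC_sub, toC_neg, Matrix.add_mulVec, Matrix.sub_mulVec,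
      Matrix.neg_mulVec, dotProduct_add, dotProduct_sub, dotProduct_neg,
      ← hr1def, ← hr2def, ← ht1def, ← hw1def, ← ht2def, ← hw2def, ← hd1def, ← hd2def]
    ring
  rw [hEXP] at hKC
  -- compute the quadratic form of T + Tᴴ
  have hT : star u ⬝ᵥ (transfer E A B C D s *ᵥ u) = w2 + d1 := by
    rw [transfer, ← hPdef, Matrix.add_mulVec, dotProduct_add, ← Matrix.mulVec_mulVec,
      ← Matrix.mulVec_mulVec, ← hxdef, ← hw2def, ← hd1def]
  have hTH : star u ⬝ᵥ ((transfer E A B C D s)ᴴ *ᵥ u) = w1 + d2 := by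
    rw [← star_quad, hT, star_add, hsw2, hsd1]
  have hLHS : star u ⬝ᵥ ((transfer E A B C D s + (transfer E A B C D s)ᴴ) *ᵥ u)
      = w1 + w2 + d1 + d2 := by
    rw [Matrix.add_mulVec, dotProduct_add, hT, hTH]; ring
  have hRHS : (s + star s) * σ + (-((r1 + r2) + (t1 - w1) + (t2 - w2) + (-d1 - d2)))
      = w1 + w2 + d1 + d2 := by
    rw [F1, F2]; ring
  rw [hLHS, ← hRHS]
  have h1 : (0:ℂ) ≤ (s + star s) * σ := by
    have hcs : s + star s = ((2 * s.re : ℝ) : ℂ) := Complex.add_conj s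
    rw [hcs, hσreal, ← Complex.ofReal_mul]
    exact Complex.zero_le_real.mpr (by nlinarith)
  exact add_nonneg h1 hKC
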